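/- arXiv:2401.17947 — 2 statements merged into one kernel-verified Lean document; each statement's English description precedes it below -/
import Mathlib

section
/- Let F be a spanning forest of the n-by-n grid graph G(n) with exactly i+1 connected components. Then the number of cut edges of F (edges of G(n) joining two distinct components of F) is at least 2(i+1) - 2n. -/
/-- The `n`-by-`n` square grid graph, as the box product of two path graphs. -/
def gridGraph (n : ℕ) : SimpleGraph (Fin n × Fin n) :=
  (SimpleGraph.pathGraph n).boxProd (SimpleGraph.pathGraph n)

/-- A spanning forest of the `n`-by-`n` grid graph with exactly `i+1` connected
components has at least `2(i+1) - 2n` cut edges (edges of the grid joining two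
distinct components of the forest). -/
theorem stmt_2 (n i : ℕ) (F : SimpleGraph (Fin n × Fin n))
    (hle : F ≤ gridGraph n) (hforest : F.IsAcyclic)
    (hcomp : Nat.card F.ConnectedComponent = i + 1) :
    (2 * ((i : ℤ) + 1) - 2 * n) ≤
      ({e : Sym2 (Fin n × Fin n) | e ∈ (gridGraph n).edgeSet ∧
        ∃ a b, e = s(a, b) ∧
          F.connectedComponentMk a ≠ F.connectedComponentMk b}.ncard : ℤ) := by
  classical
  set S : Set (Sym2 (Fin n × Fin n)) :=
    {e : Sym2 (Fin n × Fin n) | e ∈ (gridGraph n).edgeSet ∧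
      ∃ a b, e = s(a, b) ∧
        F.connectedComponentMk a ≠ F.connectedComponentMk b} with hS
  -- n is positive
  have hne : Nonempty F.ConnectedComponent := by
    have : 0 < Nat.card F.ConnectedComponent := by omega
    exact (Nat.card_pos_iff.mp this).1
  have hnpos : 0 < n := by
    obtain ⟨K⟩ := hne
    obtain ⟨v, -⟩ := K.exists_rep
    exact v.1.pos
  -- choose, for each component, a vertex maximizing a weight function
  have hmax : ∀ (f : Fin n × Fin n → ℕ) (K : F.ConnectedComponent),
      ∃ v, F.connectedComponentMk v = K ∧
        ∀ w, F.connectedComponentMk w = K → f w ≤ f v := by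
    intro f K
    obtain ⟨v0, hv0⟩ := K.exists_rep
    obtain ⟨v, hv, hmax⟩ := Finset.exists_max_image
      (Finset.univ.filter (fun v => F.connectedComponentMk v = K)) f
      ⟨v0, by simp only [Finset.mem_filter, Finset.mem_univ, true_and]; exact hv0⟩
    refine ⟨v, by simpa using hv, fun w hw => hmax w (by simpa using hw)⟩
  -- horizontal weight and vertical weight
  set fH : Fin n × Fin n → ℕ := fun v => n * v.1.val + v.2.val with hfH
  set fV : Fin n × Fin n → ℕ := fun v => n * v.2.val + v.1.val with hfV
  choose vH hvH hvHmax using hmax fH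
  choose vV hvV hvVmax using hmax fV
  have hKeqH : ∀ K K', vH K = vH K' → K = K' := by
    intro K K' h; rw [← hvH K, ← hvH K', h]
  have hKeqV : ∀ K K', vV K = vV K' → K = K' := by
    intro K K' h; rw [← hvV K, ← hvV K', h]
  -- key step: a step to the right / up from the max vertex is a cut edge
  have keyH : ∀ K (h : (vH K).1.val + 1 < n),
      s((vH K), (⟨(vH K).1.val + 1, h⟩, (vH K).2)) ∈ S := by
    intro K h
    set w : Fin n × Fin n := (⟨(vH K).1.val + 1, h⟩, (vH K).2) with hw
    have hadj : (gridGraph n).Adj (vH K) w := by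
      refine SimpleGraph.boxProd_adj.mpr (Or.inl ⟨?_, rfl⟩)
      rw [SimpleGraph.pathGraph_adj]
      exact Or.inl rfl
    have hdiff : F.connectedComponentMk (vH K) ≠ F.connectedComponentMk w := by
      intro hc
      have := hvHmax K w (by rw [← hc, hvH])
      simp only [hfH, hw] at this
      nlinarith [(vH K).2.isLt]
    exact ⟨hadj, vH K, w, rfl, hdiff⟩
  have keyV : ∀ K (h : (vV K).2.val + 1 < n),
      s((vV K), ((vV K).1, ⟨(vV K).2.val + 1, h⟩)) ∈ S := by
    intro K h
    set w : Fin n × Fin n := ((vV K).1, ⟨(vV K).2.val + 1, h⟩) with hw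
    have hadj : (gridGraph n).Adj (vV K) w := by
      refine SimpleGraph.boxProd_adj.mpr (Or.inr ⟨?_, rfl⟩)
      rw [SimpleGraph.pathGraph_adj]
      exact Or.inl rfl
    have hdiff : F.connectedComponentMk (vV K) ≠ F.connectedComponentMk w := by
      intro hc
      have := hvVmax K w (by rw [← hc, hvV])
      simp only [hfV, hw] at this
      nlinarith [(vV K).1.isLt]
    exact ⟨hadj, vV K, w, rfl, hdiff⟩
  -- the injection
  set Φ : F.ConnectedComponent ⊕ F.ConnectedComponent → ↥S ⊕ (Fin n ⊕ Fin n) :=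
    fun x => match x with
    | Sum.inl K =>
      if h : (vH K).1.val + 1 < n then Sum.inl ⟨_, keyH K h⟩
      else Sum.inr (Sum.inl (vH K).2)
    | Sum.inr K =>
      if h : (vV K).2.val + 1 < n then Sum.inl ⟨_, keyV K h⟩
      else Sum.inr (Sum.inr (vV K).1)
    with hΦ
  have hinj : Function.Injective Φ := by
    rintro (K | K) (K' | K') h <;> simp only [hΦ] at h <;>
      split_ifs at h with h1 h2 <;>
      simp only [Sum.inl.injEq, Sum.inr.injEq, Subtype.mk.injEq, Sym2.eq_iff,
        Prod.ext_iff, Fin.ext_iff, Fin.val_mk, reduceCtorEq] at h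
    · rcases h with ⟨⟨e1, e2⟩, -⟩ | ⟨⟨e1, -⟩, ⟨e3, -⟩⟩
      · exact congrArg Sum.inl (hKeqH _ _ (Prod.ext (Fin.ext e1) (Fin.ext e2)))
      · exfalso; omega
    · exact congrArg Sum.inl (hKeqH _ _ (Prod.ext (Fin.ext (by omega)) (Fin.ext h)))
    · exfalso; omega
    · exfalso; omega
    · rcases h with ⟨⟨e1, e2⟩, -⟩ | ⟨⟨-, e2⟩, ⟨-, e4⟩⟩
      · exact congrArg Sum.inr (hKeqV _ _ (Prod.ext (Fin.ext e1) (Fin.ext e2)))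
      · exfalso; omega
    · exact congrArg Sum.inr (hKeqV _ _ (Prod.ext (Fin.ext h) (Fin.ext (by omega))))
  have hcard := Nat.card_le_card_of_injective Φ hinj
  have h2 : Nat.card (F.ConnectedComponent ⊕ F.ConnectedComponent) = 2 * (i + 1) := by
    rw [Nat.card_sum, hcomp]; ring
  have h3 : Nat.card (↥S ⊕ (Fin n ⊕ Fin n)) = S.ncard + 2 * n := by
    rw [Nat.card_sum, Nat.card_sum, Nat.card_coe_set_eq]
    simp only [Nat.card_eq_fintype_card, Fintype.card_fin]
    ring
  rw [h2, h3] at hcard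
  push_cast
  omega
end

section
/- For the centipede spanning tree T_n of the n-by-n grid (n ≥ 3), the degree-mass function is p_n(d) = 1/(n-1) for each odd d in {3, 5, ..., 2n-1} and p_n(d) = 0 otherwise; consequently, for each fixed d, p_n(d) → 0 as n → ∞, and the associated power series of the centipede family is f(x) = 1 + x. -/
open Filter Set

noncomputable section
open scoped Classical

/-- The centipede spanning tree of the `n`-by-`n` grid: the spine is the full
row `0` of horizontal edges, and the legs are all vertical edges. -/
def centipede (n : ℕ) : SimpleGraph (Fin n × Fin n) where
  Adj u v :=
    (u.2 = v.2 ∧ ((u.1 : ℕ) + 1 = v.1 ∨ (v.1 : ℕ) + 1 = u.1)) ∨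
      ((u.1 : ℕ) = 0 ∧ (v.1 : ℕ) = 0 ∧ ((u.2 : ℕ) + 1 = v.2 ∨ (v.2 : ℕ) + 1 = u.2))
  symm := by
    refine ⟨?_⟩
    rintro u v (⟨h1, h2 | h2⟩ | ⟨h1, h2, h3 | h3⟩) <;> simp_all
  loopless := by
    refine ⟨?_⟩
    rintro u (⟨h1, h2 | h2⟩ | ⟨h1, h2, h3 | h3⟩) <;> omega

/-- The branch `e` of the spanning tree `T` lies on the fundamental cycle of the
chord `c`, i.e. the endpoints of `c` lie in different components of `T - e`. -/
def onCycle {V : Type*} (T : SimpleGraph V) (e c : Sym2 V) : Prop :=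
  ∃ a b, c = s(a, b) ∧ ¬ (T.deleteEdges {e}).Reachable a b

/-- The degree of a chord `c` in the bipartite graph associated to the spanning
tree `T`: the number of branches on its fundamental cycle. -/
def chordDegree {V : Type*} (T : SimpleGraph V) (c : Sym2 V) : ℕ :=
  {e | e ∈ T.edgeSet ∧ onCycle T e c}.ncard

/-- The degree-mass function: `p d` is the fraction of chords of degree `d`. -/
def degreeMass {V : Type*} (G T : SimpleGraph V) (d : ℕ) : ℝ :=
  ({c | c ∈ G.edgeSet \ T.edgeSet ∧ chordDegree T c = d}.ncard : ℝ) /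
    ((G.edgeSet \ T.edgeSet).ncard : ℝ)

private lemma reach_constant {V : Type*} {G : SimpleGraph V} {f : V → ℕ}
    (h : ∀ ⦃u v⦄, G.Adj u v → f u = f v) {a b : V} (hr : G.Reachable a b) :
    f a = f b := by
  obtain ⟨w⟩ := hr
  induction w with
  | nil => rfl
  | cons ha _ ih => exact (h ha).trans ih

private lemma grid_adj {n : ℕ} {u v : Fin n × Fin n} : (gridGraph n).Adj u v ↔
    (((u.1:ℕ)+1 = v.1 ∨ (v.1:ℕ)+1 = u.1) ∧ u.2 = v.2) ∨
    (((u.2:ℕ)+1 = v.2 ∨ (v.2:ℕ)+1 = u.2) ∧ u.1 = v.1) := by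
  simp [gridGraph, SimpleGraph.boxProd_adj, SimpleGraph.pathGraph_adj]

private def cycF (n r k : ℕ) (hr : r < n) (hk : k + 1 < n) :
    Fin r ⊕ Fin r ⊕ Unit → Sym2 (Fin n × Fin n)
  | .inl i => s(((⟨i, by have := i.isLt; omega⟩ : Fin n), (⟨k, by omega⟩ : Fin n)),
      ((⟨i+1, by have := i.isLt; omega⟩ : Fin n), (⟨k, by omega⟩ : Fin n)))
  | .inr (.inl i) => s(((⟨i, by have := i.isLt; omega⟩ : Fin n), (⟨k+1, hk⟩ : Fin n)),
      ((⟨i+1, by have := i.isLt; omega⟩ : Fin n), (⟨k+1, hk⟩ : Fin n)))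
  | .inr (.inr _) => s(((⟨0, by omega⟩ : Fin n), (⟨k, by omega⟩ : Fin n)),
      ((⟨0, by omega⟩ : Fin n), (⟨k+1, hk⟩ : Fin n)))

private lemma cycF_injective (n r k : ℕ) (hr : r < n) (hk : k + 1 < n) :
    Function.Injective (cycF n r k hr hk) := by
  have hne : ∀ x y : Fin r ⊕ Fin r ⊕ Unit,
      cycF n r k hr hk x = cycF n r k hr hk y → x ≠ y → False := by
    rintro (i | i | x) (j | j | y) h hxy
    · simp only [cycF, Sym2.eq_iff, Prod.ext_iff, Fin.ext_iff] at h
      exact hxy (by simp only [Sum.inl.injEq, Fin.ext_iff]; omega)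
    · simp only [cycF, Sym2.eq_iff, Prod.ext_iff, Fin.ext_iff] at h; omega
    · simp only [cycF, Sym2.eq_iff, Prod.ext_iff, Fin.ext_iff] at h; omega
    · simp only [cycF, Sym2.eq_iff, Prod.ext_iff, Fin.ext_iff] at h; omega
    · simp only [cycF, Sym2.eq_iff, Prod.ext_iff, Fin.ext_iff] at h
      exact hxy (by simp only [Sum.inr.injEq, Sum.inl.injEq, Fin.ext_iff]; omega)
    · simp only [cycF, Sym2.eq_iff, Prod.ext_iff, Fin.ext_iff] at h; omega
    · simp only [cycF, Sym2.eq_iff, Prod.ext_iff, Fin.ext_iff] at h; omega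
    · simp only [cycF, Sym2.eq_iff, Prod.ext_iff, Fin.ext_iff] at h; omega
    · exact hxy rfl
  intro x y h
  by_contra hxy
  exact hne x y h hxy

private lemma cyc_set (n r k : ℕ) (hr1 : 1 ≤ r) (hr : r < n) (hk : k + 1 < n) :
    {e | e ∈ (centipede n).edgeSet ∧ onCycle (centipede n) e
        s(((⟨r, hr⟩ : Fin n), (⟨k, by omega⟩ : Fin n)), ((⟨r, hr⟩ : Fin n), (⟨k+1, hk⟩ : Fin n)))} =
      Set.range (cycF n r k hr hk) := by
  ext e
  simp only [Set.mem_setOf_eq, Set.mem_range]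
  constructor
  · rintro ⟨he, a', b', hc, hnreach⟩
    by_contra hnr2
    push_neg at hnr2
    have hreach : ((centipede n).deleteEdges {e}).Reachable
        ((⟨r, hr⟩ : Fin n), (⟨k, by omega⟩ : Fin n)) ((⟨r, hr⟩ : Fin n), (⟨k+1, hk⟩ : Fin n)) := by
      have step : ∀ (x y : Fin n × Fin n), (centipede n).Adj x y →
          (∃ z, cycF n r k hr hk z = s(x, y)) → ((centipede n).deleteEdges {e}).Adj x y := by
        intro x y hxy hm
        rw [SimpleGraph.deleteEdges_adj]
        refine ⟨hxy, ?_⟩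
        simp only [Set.mem_singleton_iff]
        intro hse
        obtain ⟨z, hz⟩ := hm
        exact hnr2 z (hz.trans hse)
      have down : ∀ (c : ℕ) (hc : c < n)
          (hmem : ∀ (i : ℕ) (hi : i < r), ∃ z, cycF n r k hr hk z =
            s(((⟨i, by omega⟩ : Fin n), (⟨c, hc⟩ : Fin n)),
              ((⟨i+1, by omega⟩ : Fin n), (⟨c, hc⟩ : Fin n)))),
          ∀ (i : ℕ) (hi : i ≤ r), ((centipede n).deleteEdges {e}).Reachable
            ((⟨0, by omega⟩ : Fin n), (⟨c, hc⟩ : Fin n))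
            ((⟨i, by omega⟩ : Fin n), (⟨c, hc⟩ : Fin n)) := by
        intro c hc hmem i
        induction i with
        | zero => intro _; exact SimpleGraph.Reachable.refl _
        | succ m ih =>
          intro hi
          refine (ih (by omega)).trans (SimpleGraph.Adj.reachable (step _ _ ?_ (hmem m (by omega))))
          exact Or.inl ⟨rfl, Or.inl rfl⟩
      have hdk : ∀ (i : ℕ) (hi : i ≤ r), ((centipede n).deleteEdges {e}).Reachable
          ((⟨0, by omega⟩ : Fin n), (⟨k, by omega⟩ : Fin n))
          ((⟨i, by omega⟩ : Fin n), (⟨k, by omega⟩ : Fin n)) :=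
        down k (by omega) (fun i hi => ⟨Sum.inl ⟨i, hi⟩, rfl⟩)
      have hdk1 : ∀ (i : ℕ) (hi : i ≤ r), ((centipede n).deleteEdges {e}).Reachable
          ((⟨0, by omega⟩ : Fin n), (⟨k+1, hk⟩ : Fin n))
          ((⟨i, by omega⟩ : Fin n), (⟨k+1, hk⟩ : Fin n)) :=
        down (k+1) hk (fun i hi => ⟨Sum.inr (Sum.inl ⟨i, hi⟩), rfl⟩)
      have hspine : ((centipede n).deleteEdges {e}).Adj
          ((⟨0, by omega⟩ : Fin n), (⟨k, by omega⟩ : Fin n))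
          ((⟨0, by omega⟩ : Fin n), (⟨k+1, hk⟩ : Fin n)) :=
        step _ _ (Or.inr ⟨rfl, rfl, Or.inl rfl⟩) ⟨Sum.inr (Sum.inr ()), rfl⟩
      exact ((hdk r le_rfl).symm.trans hspine.reachable).trans (hdk1 r le_rfl)
    rw [Sym2.eq_iff] at hc
    rcases hc with ⟨rfl, rfl⟩ | ⟨rfl, rfl⟩
    · exact hnreach hreach
    · exact hnreach hreach.symm
  · rintro ⟨z, rfl⟩
    rcases z with i | i | x
    · refine ⟨(SimpleGraph.mem_edgeSet _).2 (Or.inl ⟨rfl, Or.inl rfl⟩), ?_⟩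
      refine ⟨((⟨r, hr⟩ : Fin n), (⟨k, by omega⟩ : Fin n)),
        ((⟨r, hr⟩ : Fin n), (⟨k+1, hk⟩ : Fin n)), rfl, ?_⟩
      intro hre
      have key : ∀ ⦃u v : Fin n × Fin n⦄,
          ((centipede n).deleteEdges {cycF n r k hr hk (.inl i)}).Adj u v →
          (fun w : Fin n × Fin n =>
            if (w.2:ℕ) = k ∧ (i:ℕ) < (w.1:ℕ) then 1 else 0) u =
          (fun w : Fin n × Fin n =>
            if (w.2:ℕ) = k ∧ (i:ℕ) < (w.1:ℕ) then 1 else 0) v := by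
        intro u v huv
        rw [SimpleGraph.deleteEdges_adj, Set.mem_singleton_iff] at huv
        obtain ⟨hadj, hne⟩ := huv
        have hcr : ¬(((u.1:ℕ) = i ∧ (u.2:ℕ) = k ∧ (v.1:ℕ) = i+1 ∧ (v.2:ℕ) = k) ∨
            ((v.1:ℕ) = i ∧ (v.2:ℕ) = k ∧ (u.1:ℕ) = i+1 ∧ (u.2:ℕ) = k)) := by
          intro hco
          apply hne
          simp only [cycF, Sym2.eq_iff, Prod.ext_iff, Fin.ext_iff]
          omega
        rcases hadj with ⟨hcol, hrow⟩ | ⟨h0u, h0v, hcol⟩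
        · rw [Fin.ext_iff] at hcol
          simp only
          split_ifs <;> omega
        · simp only
          split_ifs <;> omega
      have h2 := reach_constant key hre
      simp only [i.isLt, and_true, true_and, if_true, Nat.succ_ne_self] at h2
      simp [i.isLt] at h2
    · refine ⟨(SimpleGraph.mem_edgeSet _).2 (Or.inl ⟨rfl, Or.inl rfl⟩), ?_⟩
      refine ⟨((⟨r, hr⟩ : Fin n), (⟨k, by omega⟩ : Fin n)),
        ((⟨r, hr⟩ : Fin n), (⟨k+1, hk⟩ : Fin n)), rfl, ?_⟩
      intro hre
      have key : ∀ ⦃u v : Fin n × Fin n⦄,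
          ((centipede n).deleteEdges {cycF n r k hr hk (.inr (.inl i))}).Adj u v →
          (fun w : Fin n × Fin n =>
            if (w.2:ℕ) = k+1 ∧ (i:ℕ) < (w.1:ℕ) then 1 else 0) u =
          (fun w : Fin n × Fin n =>
            if (w.2:ℕ) = k+1 ∧ (i:ℕ) < (w.1:ℕ) then 1 else 0) v := by
        intro u v huv
        rw [SimpleGraph.deleteEdges_adj, Set.mem_singleton_iff] at huv
        obtain ⟨hadj, hne⟩ := huv
        have hcr : ¬(((u.1:ℕ) = i ∧ (u.2:ℕ) = k+1 ∧ (v.1:ℕ) = i+1 ∧ (v.2:ℕ) = k+1) ∨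
            ((v.1:ℕ) = i ∧ (v.2:ℕ) = k+1 ∧ (u.1:ℕ) = i+1 ∧ (u.2:ℕ) = k+1)) := by
          intro hco
          apply hne
          simp only [cycF, Sym2.eq_iff, Prod.ext_iff, Fin.ext_iff]
          omega
        rcases hadj with ⟨hcol, hrow⟩ | ⟨h0u, h0v, hcol⟩
        · rw [Fin.ext_iff] at hcol
          simp only
          split_ifs <;> omega
        · simp only
          split_ifs <;> omega
      have h2 := reach_constant key hre
      simp [i.isLt] at h2
    · refine ⟨(SimpleGraph.mem_edgeSet _).2 (Or.inr ⟨rfl, rfl, Or.inl rfl⟩), ?_⟩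
      refine ⟨((⟨r, hr⟩ : Fin n), (⟨k, by omega⟩ : Fin n)),
        ((⟨r, hr⟩ : Fin n), (⟨k+1, hk⟩ : Fin n)), rfl, ?_⟩
      intro hre
      have key : ∀ ⦃u v : Fin n × Fin n⦄,
          ((centipede n).deleteEdges {cycF n r k hr hk (.inr (.inr x))}).Adj u v →
          (fun w : Fin n × Fin n => if k < (w.2:ℕ) then 1 else 0) u =
          (fun w : Fin n × Fin n => if k < (w.2:ℕ) then 1 else 0) v := by
        intro u v huv
        rw [SimpleGraph.deleteEdges_adj, Set.mem_singleton_iff] at huv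
        obtain ⟨hadj, hne⟩ := huv
        have hcr : ¬(((u.1:ℕ) = 0 ∧ (u.2:ℕ) = k ∧ (v.1:ℕ) = 0 ∧ (v.2:ℕ) = k+1) ∨
            ((v.1:ℕ) = 0 ∧ (v.2:ℕ) = k ∧ (u.1:ℕ) = 0 ∧ (u.2:ℕ) = k+1)) := by
          intro hco
          apply hne
          simp only [cycF, Sym2.eq_iff, Prod.ext_iff, Fin.ext_iff]
          omega
        rcases hadj with ⟨hcol, hrow⟩ | ⟨h0u, h0v, hcol⟩
        · rw [Fin.ext_iff] at hcol
          simp only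
          split_ifs <;> omega
        · simp only
          split_ifs <;> omega
      have h2 := reach_constant key hre
      simp at h2

private lemma chordDeg (n r k : ℕ) (hr1 : 1 ≤ r) (hr : r < n) (hk : k + 1 < n) :
    chordDegree (centipede n)
      s(((⟨r, hr⟩ : Fin n), (⟨k, by omega⟩ : Fin n)), ((⟨r, hr⟩ : Fin n), (⟨k+1, hk⟩ : Fin n))) =
      2 * r + 1 := by
  unfold chordDegree
  rw [cyc_set n r k hr1 hr hk, ← Set.image_univ,
    Set.ncard_image_of_injective _ (cycF_injective n r k hr hk), Set.ncard_univ]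
  simp [Nat.card_eq_fintype_card]
  omega

private def chordF (n : ℕ) (q : Fin (n-1) × Fin (n-1)) : Sym2 (Fin n × Fin n) :=
  s(((⟨(q.1:ℕ)+1, by have := q.1.isLt; omega⟩ : Fin n),
     (⟨(q.2:ℕ), by have := q.2.isLt; omega⟩ : Fin n)),
    ((⟨(q.1:ℕ)+1, by have := q.1.isLt; omega⟩ : Fin n),
     (⟨(q.2:ℕ)+1, by have := q.2.isLt; omega⟩ : Fin n)))

private lemma chordF_injective (n : ℕ) : Function.Injective (chordF n) := by
  intro q q' h
  simp only [chordF, Sym2.eq_iff, Prod.ext_iff, Fin.ext_iff] at h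
  rw [Prod.ext_iff, Fin.ext_iff, Fin.ext_iff]
  omega

private lemma chord_set (n : ℕ) :
    (gridGraph n).edgeSet \ (centipede n).edgeSet = Set.range (chordF n) := by
  ext e
  induction e using Sym2.ind with
  | _ u v =>
    simp only [Set.mem_diff, SimpleGraph.mem_edgeSet, Set.mem_range, grid_adj]
    constructor
    · rintro ⟨hg, hnc⟩
      have hnc' : ¬((u.2 = v.2 ∧ ((u.1 : ℕ) + 1 = v.1 ∨ (v.1 : ℕ) + 1 = u.1)) ∨
          ((u.1 : ℕ) = 0 ∧ (v.1 : ℕ) = 0 ∧ ((u.2 : ℕ) + 1 = v.2 ∨ (v.2 : ℕ) + 1 = u.2))) := hnc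
      rcases hg with ⟨hrow, hcol⟩ | ⟨hcol, hrow⟩
      · exact absurd (Or.inl ⟨hcol, hrow⟩) hnc'
      · rw [Fin.ext_iff] at hrow
        have h1 : 1 ≤ (u.1:ℕ) := by
          by_contra h0
          exact hnc' (Or.inr ⟨by omega, by omega, hcol⟩)
        have hu1 := u.1.isLt
        have hu2 := u.2.isLt
        have hv2 := v.2.isLt
        rcases hcol with hcol | hcol
        · refine ⟨(⟨(u.1:ℕ)-1, by omega⟩, ⟨(u.2:ℕ), by omega⟩), ?_⟩
          simp only [chordF, Sym2.eq_iff, Prod.ext_iff, Fin.ext_iff, and_true, true_and]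
          omega
        · refine ⟨(⟨(u.1:ℕ)-1, by omega⟩, ⟨(v.2:ℕ), by omega⟩), ?_⟩
          simp only [chordF, Sym2.eq_iff, Prod.ext_iff, Fin.ext_iff, and_true, true_and]
          omega
    · rintro ⟨q, hq⟩
      simp only [chordF, Sym2.eq_iff, Prod.ext_iff, Fin.ext_iff] at hq
      have hq1 := q.1.isLt
      constructor
      · rcases hq with ⟨h1, h2⟩ | ⟨h1, h2⟩
        · exact Or.inr ⟨Or.inl (by omega), Fin.ext (by omega)⟩
        · exact Or.inr ⟨Or.inr (by omega), Fin.ext (by omega)⟩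
      · intro hc
        have hc2 : (u.2 = v.2 ∧ ((u.1 : ℕ) + 1 = v.1 ∨ (v.1 : ℕ) + 1 = u.1)) ∨
            ((u.1 : ℕ) = 0 ∧ (v.1 : ℕ) = 0 ∧ ((u.2 : ℕ) + 1 = v.2 ∨ (v.2 : ℕ) + 1 = u.2)) := hc
        rcases hc2 with ⟨hcol, hrow⟩ | ⟨hz1, hz2, hcol⟩
        · rw [Fin.ext_iff] at hcol
          rcases hq with ⟨h1, h2⟩ | ⟨h1, h2⟩ <;> omega
        · rcases hq with ⟨h1, h2⟩ | ⟨h1, h2⟩ <;> omega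

private lemma chordDeg' (n : ℕ) (q : Fin (n-1) × Fin (n-1)) :
    chordDegree (centipede n) (chordF n q) = 2 * ((q.1:ℕ)+1) + 1 := by
  have h1 := q.1.isLt
  have h2 := q.2.isLt
  exact chordDeg n ((q.1:ℕ)+1) (q.2:ℕ) (by omega) (by omega) (by omega)

private lemma mass_eq (n : ℕ) (hn : 3 ≤ n) (d : ℕ) :
    degreeMass (gridGraph n) (centipede n) d =
      if Odd d ∧ 3 ≤ d ∧ d ≤ 2 * n - 1 then (1 : ℝ) / (n - 1) else 0 := by
  have hden : ((gridGraph n).edgeSet \ (centipede n).edgeSet).ncard = (n-1)*(n-1) := by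
    rw [chord_set n, ← Set.image_univ,
      Set.ncard_image_of_injective _ (chordF_injective n), Set.ncard_univ]
    simp [Nat.card_eq_fintype_card]
  have hn1 : (3:ℝ) ≤ (n:ℝ) := by exact_mod_cast hn
  unfold degreeMass
  by_cases hd : Odd d ∧ 3 ≤ d ∧ d ≤ 2 * n - 1
  · rw [if_pos hd]
    obtain ⟨⟨m, hm⟩, hd3, hdle⟩ := hd
    have hmn : m - 1 < n - 1 := by omega
    have hnum : {c | c ∈ (gridGraph n).edgeSet \ (centipede n).edgeSet ∧
        chordDegree (centipede n) c = d} =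
        Set.range (fun b : Fin (n-1) => chordF n (⟨m-1, hmn⟩, b)) := by
      rw [chord_set n]
      ext c
      simp only [Set.mem_setOf_eq, Set.mem_range]
      constructor
      · rintro ⟨⟨⟨q1, q2⟩, rfl⟩, hdeg⟩
        rw [chordDeg' n (q1, q2)] at hdeg
        have hdeg' : 2 * ((q1:ℕ) + 1) + 1 = d := hdeg
        refine ⟨q2, ?_⟩
        have hq : (⟨m-1, hmn⟩ : Fin (n-1)) = q1 := by
          apply Fin.ext
          show m - 1 = (q1:ℕ)
          omega
        rw [hq]
      · rintro ⟨b, rfl⟩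
        refine ⟨⟨_, rfl⟩, ?_⟩
        rw [chordDeg']
        simp only []
        omega
    have hinj : Function.Injective (fun b : Fin (n-1) => chordF n (⟨m-1, hmn⟩, b)) :=
      fun a b h => congrArg Prod.snd (chordF_injective n h)
    rw [hnum, hden, ← Set.image_univ, Set.ncard_image_of_injective _ hinj, Set.ncard_univ]
    have hcast : ((n-1 : ℕ) : ℝ) = (n:ℝ) - 1 := by
      push_cast [Nat.cast_sub (by omega : 1 ≤ n)]; ring
    simp only [Nat.card_eq_fintype_card, Fintype.card_fin]
    rw [Nat.cast_mul, hcast]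
    have hne : (n:ℝ) - 1 ≠ 0 := by linarith
    field_simp
  · rw [if_neg hd]
    have hnum : {c | c ∈ (gridGraph n).edgeSet \ (centipede n).edgeSet ∧
        chordDegree (centipede n) c = d} = ∅ := by
      ext c
      simp only [Set.mem_setOf_eq, Set.mem_empty_iff_false, iff_false]
      rintro ⟨hcmem, hdeg⟩
      rw [chord_set n] at hcmem
      obtain ⟨q, rfl⟩ := hcmem
      rw [chordDeg' n q] at hdeg
      have hq1 := q.1.isLt
      exact hd ⟨⟨(q.1:ℕ)+1, by omega⟩, by omega, by omega⟩
    rw [hnum]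
    simp

/-- For the centipede spanning tree of the `n`-by-`n` grid (`n ≥ 3`), the
degree-mass function is `1/(n-1)` on each odd `d` with `3 ≤ d ≤ 2n-1` and `0`
otherwise; hence each `p n d → 0` as `n → ∞`, and the associated power series
of the centipede family is `f(x) = 1 + x`. -/
theorem stmt_16 (p : ℕ → ℕ → ℝ)
    (hp : ∀ n, p n = degreeMass (gridGraph n) (centipede n)) :
    (∀ n, 3 ≤ n → ∀ d : ℕ,
        p n d = if Odd d ∧ 3 ≤ d ∧ d ≤ 2 * n - 1 then (1 : ℝ) / (n - 1) else 0) ∧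
      (∀ d : ℕ, Tendsto (fun n : ℕ => p n d) atTop (nhds 0)) ∧
      (∀ pinf : ℕ → ℝ,
        (∀ d : ℕ, Tendsto (fun n : ℕ => p n d) atTop (nhds (pinf d))) →
        ∀ x ∈ Icc (0 : ℝ) 1, 1 + x - ∑' d : ℕ, pinf d * (1 - x) ^ d = 1 + x) := by
  have key : ∀ n, 3 ≤ n → ∀ d : ℕ,
      p n d = if Odd d ∧ 3 ≤ d ∧ d ≤ 2 * n - 1 then (1 : ℝ) / (n - 1) else 0 := by
    intro n hn d
    rw [hp]
    exact mass_eq n hn d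
  have htend : ∀ d : ℕ, Tendsto (fun n : ℕ => p n d) atTop (nhds 0) := by
    intro d
    have hg : Tendsto (fun n : ℕ => 1/((n:ℝ)-1)) atTop (nhds 0) := by
      have h1 : Tendsto (fun n : ℕ => ((n:ℝ)-1)) atTop atTop :=
        tendsto_atTop_add_const_right _ (-1) tendsto_natCast_atTop_atTop
      simp only [one_div]; exact h1.inv_tendsto_atTop
    refine squeeze_zero_norm' ?_ hg
    filter_upwards [eventually_ge_atTop 3] with n hn
    have hn1 : (3:ℝ) ≤ (n:ℝ) := by exact_mod_cast hn
    have h3 : (0:ℝ) ≤ 1/((n:ℝ)-1) := by apply div_nonneg <;> linarith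
    rw [key n hn d]
    split_ifs with h
    · rw [Real.norm_eq_abs, abs_of_nonneg h3]
    · simpa using h3
  refine ⟨key, htend, ?_⟩
  intro pinf hpinf x _
  have hz : ∀ d, pinf d = 0 := fun d => tendsto_nhds_unique (hpinf d) (htend d)
  simp [hz]
end
end
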